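/- Let $0 < \hat\sigma < \sigma$, let $z_s(g) = 1/g + s^2 g$ for $s > 0$, and let $a < b$ be real numbers with $g_\sigma(b) < g_\sigma(a)$ both nonzero, where $g_\sigma$ is the Stieltjes transform of the semicircle law of variance $\sigma^2$ restricted to $\mathbb{R} \setminus [-2\sigma, 2\sigma]$ and $a, b$ lie in the same component of this set. Then $z_{\hat\sigma}(g_\sigma(b)) - z_{\hat\sigma}(g_\sigma(a)) \geq b - a$. -/
import Mathlib


/-- The Stieltjes transform of the semicircle law of variance `σ^2`, on `ℝ \ [-2σ, 2σ]`,
given by its explicit formula. -/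
noncomputable def gSCReal (σ x : ℝ) : ℝ :=
  x / (2 * σ^2) * (1 - Real.sqrt (1 - 4 * σ^2 / x^2))

/-- Inverse of the Stieltjes transform of the semicircle law of variance `s^2`. -/
noncomputable def zS (s g : ℝ) : ℝ := 1 / g + s^2 * g

lemma zS_gSCReal (σ x : ℝ) (hσ : 0 < σ) (hx : 2 * σ < |x|) :
    zS σ (gSCReal σ x) = x := by
  have hx2 : (2 * σ)^2 < x^2 := by
    have := sq_lt_sq' (by linarith [abs_nonneg x, neg_abs_le x] : -|x| < 2*σ) hx
    simpa [sq_abs] using this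
  have hx0 : x ≠ 0 := by
    intro h; rw [h] at hx2; nlinarith
  have hx2pos : (0:ℝ) < x^2 := by positivity
  set s := Real.sqrt (1 - 4 * σ^2 / x^2) with hs
  have harg : 0 ≤ 1 - 4 * σ^2 / x^2 := by
    rw [sub_nonneg, div_le_one hx2pos]; nlinarith
  have hs2 : s^2 = 1 - 4 * σ^2 / x^2 := by rw [hs]; exact Real.sq_sqrt harg
  have hsnn : 0 ≤ s := by rw [hs]; exact Real.sqrt_nonneg _
  clear_value s
  have hslt : s < 1 := by
    nlinarith [div_pos (by positivity : (0:ℝ) < 4 * σ^2) hx2pos]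
  have hσ0 : σ ≠ 0 := ne_of_gt hσ
  have hs1 : (1:ℝ) - s ≠ 0 := by intro h; nlinarith
  have hs2' : s^2 * x^2 = x^2 - 4 * σ^2 := by
    field_simp at hs2; linarith
  have hgval : gSCReal σ x = x * (1 - s) / (2 * σ^2) := by
    rw [gSCReal, ← hs]; ring
  rw [zS, hgval]
  field_simp
  nlinarith [hs2']

theorem zS_gSCReal_interval_grows (σ σhat : ℝ) (hσhat : 0 < σhat) (hlt : σhat < σ)
    (a b : ℝ) (hab : a < b) (hcomp : 2 * σ < a ∨ b < -(2 * σ))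
    (hg : gSCReal σ b < gSCReal σ a)
    (ha0 : gSCReal σ a ≠ 0) (hb0 : gSCReal σ b ≠ 0) :
    b - a ≤ zS σhat (gSCReal σ b) - zS σhat (gSCReal σ a) := by
  have hσ : 0 < σ := lt_trans hσhat hlt
  have ha : 2 * σ < |a| := by
    rcases hcomp with h | h
    · rw [abs_of_pos (by linarith)]; exact h
    · rw [abs_of_neg (by linarith)]; linarith
  have hb : 2 * σ < |b| := by
    rcases hcomp with h | h
    · rw [abs_of_pos (by linarith)]; linarith
    · rw [abs_of_neg (by linarith)]; linarith
  have hA := zS_gSCReal σ a hσ ha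
  have hB := zS_gSCReal σ b hσ hb
  have key : zS σhat (gSCReal σ b) - zS σhat (gSCReal σ a)
      = (zS σ (gSCReal σ b) - zS σ (gSCReal σ a))
        + (σhat^2 - σ^2) * (gSCReal σ b - gSCReal σ a) := by
    unfold zS; ring
  rw [key, hA, hB]
  nlinarith [mul_pos (show (0:ℝ) < σ^2 - σhat^2 by nlinarith)
    (sub_pos.mpr hg)]
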